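/- Let (𝒜, ℬ) be a small cotorsion pair in a Grothendieck category 𝒢 with a generator G ∈ 𝒜. If the induced cotorsion pairs (dg-𝒜, ℬ̃) and (𝒜̃, dg-ℬ) on Ch(𝒢) are compatible (i.e., dg-𝒜 ∩ ℰ = 𝒜̃ and dg-ℬ ∩ ℰ = ℬ̃, where ℰ is the class of exact complexes), then 𝒜 is closed under kernels of epimorphisms between objects of 𝒜 and ℬ is closed under cokernels of monomorphisms between objects of ℬ. -/

import Mathlib

open CategoryTheory Limits

universe v u

variable {𝒢 : Type u} [Category.{v} 𝒢] [Abelian 𝒢]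

/-- `Ext¹(A, B) = 0`, expressed by the splitting of every short exact sequence
`0 → B → T → A → 0`. -/
def Ext1IsZero (A B : 𝒢) : Prop :=
  ∀ (T : 𝒢) (k : B ⟶ T) (r : T ⟶ A) (w : k ≫ r = 0),
    Mono k → Epi r → (ShortComplex.mk k r w).Exact → ∃ s : A ⟶ T, s ≫ r = 𝟙 A

/-- `(𝒜, ℬ)` is a cotorsion pair: each class is the `Ext¹`-orthogonal of the other. -/
structure IsCotorsionPair (𝒜 ℬ : Set 𝒢) : Prop where
  mem_left : ∀ X : 𝒢, X ∈ 𝒜 ↔ ∀ B ∈ ℬ, Ext1IsZero X B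
  mem_right : ∀ Y : 𝒢, Y ∈ ℬ ↔ ∀ A ∈ 𝒜, Ext1IsZero A Y

/-- A set `I` of generating monomorphisms exhibiting a cotorsion pair `(𝒜, ℬ)` as *small*:
the family `f i : dom i ⟶ cod i` consists of monomorphisms, it contains the map
`0 ⟶ G` for a generator `G ∈ 𝒜` (the index `i₀`), the cokernels of its members
cogenerate the pair, and surjectivity of all `Hom(f i, X)` forces `X ∈ ℬ`. -/
structure SmallCotorsionData (𝒜 ℬ : Set 𝒢) where
  ι : Type v
  dom : ι → 𝒢
  cod : ι → 𝒢
  f : ∀ i, dom i ⟶ cod i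
  mono : ∀ i, Mono (f i)
  i₀ : ι
  dom_i₀_zero : IsZero (dom i₀)
  cod_i₀_separator : IsSeparator (cod i₀)
  cod_i₀_mem : cod i₀ ∈ 𝒜
  cogenerates : ∀ Y : 𝒢, Y ∈ ℬ ↔ ∀ i, Ext1IsZero (cokernel (f i)) Y
  detects : ∀ X : 𝒢,
    (∀ i, Function.Surjective (fun g : cod i ⟶ X => f i ≫ g)) → X ∈ ℬ

/-- A chain complex is exact (acyclic). -/
def IsExactComplex (X : ChainComplex 𝒢 ℤ) : Prop := ∀ n : ℤ, X.ExactAt n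

/-- `𝒜̃`: exact complexes with all cycles in `𝒜`. -/
def ATilde (𝒜 : Set 𝒢) (X : ChainComplex 𝒢 ℤ) : Prop :=
  IsExactComplex X ∧ ∀ n : ℤ, X.cycles n ∈ 𝒜

/-- `ℬ̃`: exact complexes with all cycles in `ℬ`. -/
def BTilde (ℬ : Set 𝒢) (X : ChainComplex 𝒢 ℤ) : Prop :=
  IsExactComplex X ∧ ∀ n : ℤ, X.cycles n ∈ ℬ

/-- `dg-𝒜`: complexes with entries in `𝒜` such that every chain map to a complex
in `ℬ̃` is null homotopic. -/
def DgA (𝒜 ℬ : Set 𝒢) (X : ChainComplex 𝒢 ℤ) : Prop :=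
  (∀ n : ℤ, X.X n ∈ 𝒜) ∧
    ∀ (B : ChainComplex 𝒢 ℤ), BTilde ℬ B → ∀ f : X ⟶ B, Nonempty (Homotopy f 0)

/-- `dg-ℬ`: complexes with entries in `ℬ` such that every chain map from a complex
in `𝒜̃` is null homotopic. -/
def DgB (𝒜 ℬ : Set 𝒢) (Y : ChainComplex 𝒢 ℤ) : Prop :=
  (∀ n : ℤ, Y.X n ∈ ℬ) ∧
    ∀ (A : ChainComplex 𝒢 ℤ), ATilde 𝒜 A → ∀ f : A ⟶ Y, Nonempty (Homotopy f 0)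

open ZeroObject

set_option linter.unusedSectionVars false

/-- lifting along an epi with `Ext¹`-trivial kernel -/
lemma lift_of_ext1 {K T Z Q : 𝒢} (k : K ⟶ T) (r : T ⟶ Z) (w : k ≫ r = 0)
    (hk : Mono k) (hr : Epi r) (hex : (ShortComplex.mk k r w).Exact)
    (h : Ext1IsZero Q K) (g : Q ⟶ Z) : ∃ l : Q ⟶ T, l ≫ r = g := by
  have hw : k ≫ r = 0 ≫ g := by simp [w]
  let kB : K ⟶ pullback r g := pullback.lift k 0 hw
  have hfst : kB ≫ pullback.fst r g = k := pullback.lift_fst _ _ _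
  have hsnd : kB ≫ pullback.snd r g = 0 := pullback.lift_snd _ _ _
  have hmono : Mono kB := by
    have h2 : Mono (kB ≫ pullback.fst r g) := by rw [hfst]; infer_instance
    exact mono_of_mono kB (pullback.fst r g)
  have hepi : Epi (pullback.snd r g) := inferInstance
  have hlim : IsLimit (KernelFork.ofι kB hsnd) :=
    KernelFork.IsLimit.ofι' kB hsnd (fun {W} t ht => by
      refine ⟨hex.lift (t ≫ pullback.fst r g) ?_, ?_⟩
      · rw [Category.assoc, pullback.condition, ← Category.assoc, ht, zero_comp]
      · apply pullback.hom_ext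
        · rw [Category.assoc, hfst]; exact hex.lift_f _ _
        · rw [Category.assoc, hsnd, comp_zero, ht])
  have hex2 : (ShortComplex.mk kB (pullback.snd r g) hsnd).Exact :=
    ShortComplex.exact_of_f_is_kernel _ hlim
  obtain ⟨s, hs⟩ := h (pullback r g) kB (pullback.snd r g) hsnd hmono hepi hex2
  refine ⟨s ≫ pullback.fst r g, ?_⟩
  rw [Category.assoc, pullback.condition, ← Category.assoc, hs, Category.id_comp]

/-- extending along a mono with `Ext¹`-trivial cokernel -/
lemma extend_of_ext1 {K T Z W : 𝒢} (k : K ⟶ T) (r : T ⟶ Z) (w : k ≫ r = 0)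
    (hk : Mono k) (hr : Epi r) (hex : (ShortComplex.mk k r w).Exact)
    (h : Ext1IsZero Z W) (g : K ⟶ W) : ∃ e : T ⟶ W, k ≫ e = g := by
  have hw : k ≫ r = g ≫ 0 := by simp [w]
  let ρ : pushout k g ⟶ Z := pushout.desc r 0 hw
  have hinl : pushout.inl k g ≫ ρ = r := pushout.inl_desc _ _ _
  have hinr : pushout.inr k g ≫ ρ = 0 := pushout.inr_desc _ _ _
  have hmono : Mono (pushout.inr k g) := inferInstance
  have hepi : Epi ρ := by
    have h2 : Epi (pushout.inl k g ≫ ρ) := by rw [hinl]; infer_instance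
    exact epi_of_epi (pushout.inl k g) ρ
  have hcolim : IsColimit (CokernelCofork.ofπ ρ hinr) :=
    CokernelCofork.IsColimit.ofπ' ρ hinr (fun {V} t ht => by
      refine ⟨hex.desc (pushout.inl k g ≫ t) ?_, ?_⟩
      · rw [← Category.assoc, pushout.condition, Category.assoc, ht, comp_zero]
      · apply pushout.hom_ext
        · rw [← Category.assoc, hinl]; exact hex.g_desc _ _
        · rw [← Category.assoc, hinr, zero_comp, ht])
  have hex2 : (ShortComplex.mk (pushout.inr k g) ρ hinr).Exact :=
    ShortComplex.exact_of_g_is_cokernel _ hcolim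
  obtain ⟨s, hs⟩ := h (pushout k g) (pushout.inr k g) ρ hinr hmono hepi hex2
  -- e' := 𝟙 - ρ ≫ s kills ρ, factors through inr
  have he' : (𝟙 (pushout k g) - ρ ≫ s) ≫ ρ = 0 := by
    simp only [Preadditive.sub_comp, Category.id_comp, Category.assoc, hs, Category.comp_id,
      sub_self]
  obtain ⟨τ, hτ⟩ := hex2.lift' (𝟙 (pushout k g) - ρ ≫ s) he'
  have hτ' : τ ≫ pushout.inr k g = 𝟙 (pushout k g) - ρ ≫ s := hτ
  have hτinr : pushout.inr k g ≫ τ = 𝟙 W := by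
    rw [← cancel_mono (pushout.inr k g), Category.assoc, hτ', Category.id_comp,
      Preadditive.comp_sub, Category.comp_id, ← Category.assoc, hinr, zero_comp, sub_zero]
  refine ⟨pushout.inl k g ≫ τ, ?_⟩
  rw [← Category.assoc, pushout.condition, Category.assoc, hτinr, Category.comp_id]

lemma ext1_of_isZero_left {A B : 𝒢} (hA : IsZero A) : Ext1IsZero A B := by
  intro T k r w hk hr hex
  exact ⟨0, by rw [zero_comp]; exact (hA.eq_of_src _ _).symm⟩

lemma Ext1IsZero.of_iso_left {A A' B : 𝒢} (e : A ≅ A') (h : Ext1IsZero A B) :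
    Ext1IsZero A' B := by
  intro T k r w hk hr hex
  have w' : k ≫ (r ≫ e.inv) = 0 := by rw [← Category.assoc, w, zero_comp]
  have hex' : (ShortComplex.mk k (r ≫ e.inv) w').Exact := by
    refine (ShortComplex.exact_iff_of_iso ?_).mp hex
    exact ShortComplex.isoMk (Iso.refl _) (Iso.refl _) e.symm (by simp) (by simp)
  obtain ⟨s, hs⟩ := h T k (r ≫ e.inv) w' hk (by exact epi_comp _ _) hex'
  refine ⟨e.inv ≫ s, ?_⟩
  have : s ≫ r = e.hom := by
    have := hs
    rw [← Category.assoc] at this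
    calc s ≫ r = (s ≫ r ≫ e.inv) ≫ e.hom := by simp
    _ = e.hom := by rw [← Category.assoc, this, Category.id_comp]
  rw [Category.assoc, this, e.inv_hom_id]

lemma Ext1IsZero.of_iso_right {A B B' : 𝒢} (e : B ≅ B') (h : Ext1IsZero A B) :
    Ext1IsZero A B' := by
  intro T k r w hk hr hex
  have w' : (e.hom ≫ k) ≫ r = 0 := by rw [Category.assoc, w, comp_zero]
  have hex' : (ShortComplex.mk (e.hom ≫ k) r w').Exact := by
    refine (ShortComplex.exact_iff_of_iso ?_).mp hex
    exact ShortComplex.isoMk e.symm (Iso.refl _) (Iso.refl _) (by simp) (by simp)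
  exact h T (e.hom ≫ k) r w' (by exact mono_comp _ _) hr hex'

/-- a coproduct of objects with vanishing `Ext¹` against `B` has vanishing `Ext¹`. -/
lemma ext1_sigma {I : Type v} (F : I → 𝒢) (B : 𝒢) [HasColimits 𝒢]
    (h : ∀ c : I, Ext1IsZero (F c) B) : Ext1IsZero (∐ F) B := by
  intro T k r w hk hr hex
  have key : ∀ c : I, ∃ l : F c ⟶ T, l ≫ r = Sigma.ι F c := fun c =>
    lift_of_ext1 k r w hk hr hex (h c) (Sigma.ι F c)
  choose l hl using key
  refine ⟨Sigma.desc l, ?_⟩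
  apply Sigma.hom_ext
  intro c
  rw [← Category.assoc, Sigma.ι_desc, hl, Category.comp_id]

section ComplexLemmas

lemma down_prev (n : ℤ) : (ComplexShape.down ℤ).prev n = n + 1 :=
  (ComplexShape.down ℤ).prev_eq' (by simp)

lemma down_next (n : ℤ) : (ComplexShape.down ℤ).next n = n - 1 :=
  (ComplexShape.down ℤ).next_eq' (by simp [ComplexShape.down_Rel])

variable {ι' : Type*} {c : ComplexShape ι'}

lemma eqToHom_comp_d (K : HomologicalComplex 𝒢 c) {i i' j : ι'} (h : i = i') :
    eqToHom (congrArg K.X h) ≫ K.d i' j = K.d i j := by subst h; simp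

lemma d_comp_eqToHom (K : HomologicalComplex 𝒢 c) {i j j' : ι'} (h : j = j') :
    K.d i j ≫ eqToHom (congrArg K.X h) = K.d i j' := by subst h; simp

/-- exactness of `(e ≫ m, g)` when `e` is epi and `(m, g)` is exact with `m` mono -/
lemma exact_epi_comp_ker {W V U Z : 𝒢} (e : W ⟶ V) (m : V ⟶ U) (g : U ⟶ Z)
    [Epi e] [Mono m] (w : m ≫ g = 0) (hker : (ShortComplex.mk m g w).Exact)
    (w2 : (e ≫ m) ≫ g = 0) : (ShortComplex.mk (e ≫ m) g w2).Exact := by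
  rw [ShortComplex.exact_iff_epi_toCycles]
  -- toCycles of the new complex is e ≫ (iso V ≅ cycles)
  have hlim := hker.fIsKernel
  let S := ShortComplex.mk (e ≫ m) g w2
  let ψ : V ⟶ S.cycles := S.liftCycles m w
  have hψi : ψ ≫ S.iCycles = m := S.liftCycles_i _ _
  have hiso : IsIso ψ := by
    let φ : S.cycles ⟶ V := hker.lift S.iCycles S.iCycles_g
    have hφ : φ ≫ m = S.iCycles := hker.lift_f _ _
    refine ⟨φ, ?_, ?_⟩
    · rw [← cancel_mono m, Category.assoc, hφ, hψi, Category.id_comp]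
    · rw [← cancel_mono S.iCycles, Category.assoc, hψi, hφ, Category.id_comp]
  have htc : S.toCycles = e ≫ ψ := by
    rw [← cancel_mono S.iCycles, S.toCycles_i, Category.assoc, hψi]
  rw [htc]
  exact epi_comp _ _

/-- exactness of `(m, g ≫ m')` when `(m, g)` exact, `m` mono, `m'` mono -/
lemma exact_ker_comp_mono {V U Z Z' : 𝒢} (m : V ⟶ U) (g : U ⟶ Z) (m' : Z ⟶ Z')
    [Mono m] [Mono m'] (w : m ≫ g = 0) (hker : (ShortComplex.mk m g w).Exact)
    (w2 : m ≫ (g ≫ m') = 0) : (ShortComplex.mk m (g ≫ m') w2).Exact := by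
  apply ShortComplex.exact_of_f_is_kernel
  refine KernelFork.IsLimit.ofι' m w2 (fun {A} t ht => ?_)
  have ht' : t ≫ g = 0 := by
    rw [← cancel_mono m', Category.assoc, ht, zero_comp]
  exact ⟨hker.lift t ht', hker.lift_f _ _⟩

end ComplexLemmas

section LiftB
variable {𝒜 ℬ : Set 𝒢}

/-- Lifting a cycle-valued map into the next stage of an exact complex whose
cycles lie in `ℬ`, against an object of `𝒜`. -/
lemma liftB (hpair : IsCotorsionPair 𝒜 ℬ) {B : ChainComplex 𝒢 ℤ} (hB : BTilde ℬ B)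
    {Q : 𝒢} (hQ : Q ∈ 𝒜) (n : ℤ) (g : Q ⟶ B.X n) (hg : g ≫ B.d n (n - 1) = 0) :
    ∃ l : Q ⟶ B.X (n + 1), l ≫ B.d (n + 1) n = g := by
  -- the short complex around n
  have hexn : (B.sc' (n + 1) n (n - 1)).Exact :=
    (B.exactAt_iff' (n + 1) n (n - 1) (down_prev n) (down_next n)).mp (hB.1 n)
  set S := B.sc' (n + 1) n (n - 1) with hS
  have hepi : Epi S.toCycles := (ShortComplex.exact_iff_epi_toCycles S).mp hexn
  -- kernel of S.toCycles is B.cycles (n+1)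
  have hwι : B.iCycles (n + 1) ≫ S.toCycles = 0 := by
    rw [← cancel_mono S.iCycles]; refine (Category.assoc _ _ _).trans (((congrArg (fun x => B.iCycles (n + 1) ≫ x) S.toCycles_i).trans ?_).trans zero_comp.symm)
    exact B.iCycles_d (n + 1) n
  have hlim : IsLimit (KernelFork.ofι (B.iCycles (n + 1)) hwι) := by
    refine KernelFork.IsLimit.ofι' _ _ (fun {W} t ht => ?_)
    have ht' : t ≫ B.d (n + 1) n = 0 := by
      have : t ≫ S.toCycles ≫ S.iCycles = 0 := by exact ((Category.assoc _ _ _).symm.trans (congrArg (fun x => x ≫ S.iCycles) ht)).trans zero_comp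
      replace this := (congrArg (fun x => t ≫ x) S.toCycles_i).symm.trans this
      exact this
    exact ⟨B.liftCycles t n (by rw [down_next]; omega) ht', B.liftCycles_i _ _ _ _⟩
  have hexk : (ShortComplex.mk (B.iCycles (n + 1)) S.toCycles hwι).Exact :=
    ShortComplex.exact_of_f_is_kernel _ hlim
  have hmonoB : Mono (B.iCycles (n + 1)) := inferInstance
  -- Ext¹(Q, cycles (n+1)) = 0
  have hext : Ext1IsZero Q (B.cycles (n + 1)) :=
    (hpair.mem_left Q).mp hQ _ (hB.2 (n + 1))
  -- lift g into S.cycles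
  have hgS : g ≫ S.g = 0 := hg
  let gc : Q ⟶ S.cycles := S.liftCycles g hgS
  obtain ⟨l, hl⟩ := lift_of_ext1 _ _ _ hmonoB hepi hexk hext gc
  refine ⟨l, ?_⟩
  have : l ≫ S.toCycles ≫ S.iCycles = gc ≫ S.iCycles := by exact (Category.assoc _ _ _).symm.trans (congrArg (fun x => x ≫ S.iCycles) hl)
  replace this := ((congrArg (fun x => l ≫ x) S.toCycles_i).symm.trans this).trans (S.liftCycles_i _ _)
  exact this

end LiftB

section BBHomotopy
variable {𝒜 ℬ : Set 𝒢}

variable {C B : ChainComplex 𝒢 ℤ}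

/-- The homotopy invariant at degree `n`. -/
def GoodAt (f : C ⟶ B) (n : ℤ) (a : C.X (n - 1) ⟶ B.X (n - 1 + 1))
    (b : C.X n ⟶ B.X (n + 1)) : Prop :=
  f.f n = C.d n (n - 1) ≫ a ≫ eqToHom (congrArg B.X (by omega : n - 1 + 1 = n)) +
    b ≫ B.d (n + 1) n

variable (f : C ⟶ B)

lemma goodAt_zero (hCz : ∀ n : ℤ, n < 0 → IsZero (C.X n)) {n : ℤ} (hn : n < 0) :
    GoodAt f n 0 0 := by
  unfold GoodAt
  rw [(hCz n hn).eq_of_src (f.f n) 0]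
  simp

lemma goodAt_cast {n n' : ℤ} (h : n = n') (a : C.X (n - 1) ⟶ B.X (n - 1 + 1))
    (b : C.X n ⟶ B.X (n + 1)) (hG : GoodAt f n a b) :
    GoodAt f n' (eqToHom (congrArg C.X (by rw [h])) ≫ a ≫ eqToHom (congrArg B.X (by rw [h])))
      (eqToHom (congrArg C.X h.symm) ≫ b ≫ eqToHom (congrArg B.X (by rw [h]))) := by
  subst h
  simpa using hG

lemma goodAt_step (hpair : IsCotorsionPair 𝒜 ℬ) (hB : BTilde ℬ B) (hCA : ∀ n : ℤ, C.X n ∈ 𝒜) (n : ℤ)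
    (a' : C.X (n - 1 - 1) ⟶ B.X (n - 1 - 1 + 1)) (a : C.X (n - 1) ⟶ B.X (n - 1 + 1))
    (hprev : GoodAt f (n - 1) a' a) :
    ∃ b : C.X n ⟶ B.X (n + 1), GoodAt f n a b := by
  set e : B.X (n - 1 + 1) ⟶ B.X n := eqToHom (congrArg B.X (by omega : n - 1 + 1 = n)) with he
  set g : C.X n ⟶ B.X n := f.f n - C.d n (n - 1) ≫ a ≫ e with hg
  have hg0 : g ≫ B.d n (n - 1) = 0 := by
    have hcomm : f.f n ≫ B.d n (n - 1) = C.d n (n - 1) ≫ f.f (n - 1) := f.comm n (n - 1)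
    have hexp : f.f (n - 1) = C.d (n - 1) (n - 1 - 1) ≫ a' ≫
        eqToHom (congrArg B.X (by omega : n - 1 - 1 + 1 = n - 1)) +
        a ≫ B.d (n - 1 + 1) (n - 1) := hprev
    have he2 : e ≫ B.d n (n - 1) = B.d (n - 1 + 1) (n - 1) :=
      eqToHom_comp_d B (by omega : n - 1 + 1 = n)
    rw [hg, Preadditive.sub_comp, hcomm, hexp, Preadditive.comp_add]
    rw [Category.assoc, Category.assoc, he2]
    rw [← Category.assoc (C.d n (n-1)) (C.d (n-1) (n-1-1)) _, C.d_comp_d, zero_comp, zero_add]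
    simp
  obtain ⟨b, hb⟩ := liftB hpair hB (hCA n) n g hg0
  refine ⟨b, ?_⟩
  unfold GoodAt
  rw [hb, hg]
  abel

end BBHomotopy

section BBH2
variable {𝒜 ℬ : Set 𝒢} {C B : ChainComplex 𝒢 ℤ}

lemma heq_morph {X X' Y Y' : 𝒢} (hX : X = X') (hY : Y = Y') {u : X ⟶ Y} {v : X' ⟶ Y'}
    (h : HEq u v) : u = eqToHom hX ≫ v ≫ eqToHom hY.symm := by
  subst hX; subst hY
  rw [heq_iff_eq] at h
  subst h
  simp

/-- Main homotopy lemma: a bounded-below complex with entries in `𝒜` maps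
null-homotopically to any `ℬ̃`-complex. -/
lemma bb_homotopy (hpair : IsCotorsionPair 𝒜 ℬ)
    (hCz : ∀ n : ℤ, n < 0 → IsZero (C.X n)) (hCA : ∀ n : ℤ, C.X n ∈ 𝒜)
    (hB : BTilde ℬ B) (f : C ⟶ B) : Nonempty (Homotopy f 0) := by
  classical
  let M : ℕ → Type _ := fun k =>
    Σ' (a : C.X ((k : ℤ) - 1) ⟶ B.X ((k : ℤ) - 1 + 1)) (b : C.X (k : ℤ) ⟶ B.X ((k : ℤ) + 1)),
      GoodAt f (k : ℤ) a b
  let F : ∀ k : ℕ, M k := fun k => Nat.rec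
    (⟨0, (goodAt_step f hpair hB hCA 0 0 0 (goodAt_zero f hCz (by omega))).choose,
      (goodAt_step f hpair hB hCA 0 0 0 (goodAt_zero f hCz (by omega))).choose_spec⟩ : M 0)
    (fun m ih =>
      (⟨_, (goodAt_step f hpair hB hCA ((m + 1 : ℕ) : ℤ) _ _
          (goodAt_cast f (by push_cast; ring : ((m : ℕ) : ℤ) = ((m + 1 : ℕ) : ℤ) - 1)
            ih.1 ih.2.1 ih.2.2)).choose,
        (goodAt_step f hpair hB hCA ((m + 1 : ℕ) : ℤ) _ _
          (goodAt_cast f (by push_cast; ring) ih.1 ih.2.1 ih.2.2)).choose_spec⟩ : M (m + 1))) k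
  let σ : ∀ n : ℤ, C.X n ⟶ B.X (n + 1) := fun n =>
    if hn : 0 ≤ n then
      eqToHom (congrArg C.X (Int.toNat_of_nonneg hn).symm) ≫ (F n.toNat).2.1 ≫
        eqToHom (congrArg B.X (by rw [Int.toNat_of_nonneg hn]))
    else 0
  have hσgood : ∀ n : ℤ, GoodAt f n (σ (n - 1)) (σ n) := by
    intro n
    rcases lt_trichotomy n 0 with hn | hn | hn
    · have h1 : σ n = 0 := dif_neg (by omega)
      have h2 : σ (n - 1) = 0 := dif_neg (by omega)
      rw [h1, h2]
      exact goodAt_zero f hCz hn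
    · subst hn
      have h2 : σ (0 - 1) = 0 := dif_neg (by omega)
      have h1 : σ 0 = (F 0).2.1 := by
        show dite _ _ _ = _
        rw [dif_pos (le_refl (0 : ℤ))]
        show 𝟙 _ ≫ (F 0).2.1 ≫ 𝟙 _ = (F 0).2.1
        simp
      rw [h1, h2]
      exact (F 0).2.2
    · obtain ⟨m, hm⟩ : ∃ m : ℕ, n = ((m + 1 : ℕ) : ℤ) := ⟨(n - 1).toNat, by omega⟩
      subst hm
      have h1 : σ ((m + 1 : ℕ) : ℤ) = (F (m + 1)).2.1 := by
        show dite _ _ _ = _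
        rw [dif_pos (by positivity : (0 : ℤ) ≤ ((m + 1 : ℕ) : ℤ))]
        show 𝟙 _ ≫ (F (m + 1)).2.1 ≫ 𝟙 _ = (F (m + 1)).2.1
        simp
      have hFa : (F (m + 1)).1 =
          eqToHom (congrArg C.X (by push_cast; ring : ((m : ℕ) : ℤ) = ((m + 1 : ℕ) : ℤ) - 1).symm)
            ≫ (F m).2.1 ≫ eqToHom (congrArg B.X (by push_cast; ring)) := rfl
      have h2 : σ (((m + 1 : ℕ) : ℤ) - 1) = (F (m + 1)).1 := by
        have hnn : (0 : ℤ) ≤ ((m + 1 : ℕ) : ℤ) - 1 := by push_cast; omega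
        have htn : (((m + 1 : ℕ) : ℤ) - 1).toNat = m := by omega
        have hh : HEq (F ((((m + 1 : ℕ) : ℤ) - 1).toNat)).2.1 (F m).2.1 := by
          rw [htn]
        have h3 : σ (((m + 1 : ℕ) : ℤ) - 1) = dite _ _ _ := rfl
        rw [h3, dif_pos hnn, hFa]
        have h4 := heq_morph
          (congrArg C.X (congrArg (fun t : ℕ => ((t : ℕ) : ℤ)) htn) :
            C.X ((((m + 1 : ℕ) : ℤ) - 1).toNat : ℤ) = C.X ((m : ℕ) : ℤ))
          (congrArg (fun t : ℤ => B.X (t + 1)) (congrArg (fun t : ℕ => ((t : ℕ) : ℤ)) htn) :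
            B.X (((((m + 1 : ℕ) : ℤ) - 1).toNat : ℤ) + 1) = B.X (((m : ℕ) : ℤ) + 1)) hh
        rw [h4]
        simp [eqToHom_trans]
      rw [h1, h2]
      exact (F (m + 1)).2.2
  -- assemble the homotopy
  refine ⟨{
    hom := fun i j => if h : j = i + 1 then σ i ≫ eqToHom (congrArg B.X h.symm) else 0
    zero := fun i j hrel => by
      rw [dif_neg]
      intro h
      exact hrel (by simp [ComplexShape.down_Rel, h])
    comm := fun n => by
      have hrel1 : (ComplexShape.down ℤ).Rel n (n - 1) := by
        simp [ComplexShape.down_Rel]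
      have hrel2 : (ComplexShape.down ℤ).Rel (n + 1) n := by
        simp [ComplexShape.down_Rel]
      rw [dNext_eq _ hrel1, prevD_eq _ hrel2]
      have e1 : (if h : n = (n - 1) + 1 then σ (n - 1) ≫ eqToHom (congrArg B.X h.symm) else 0)
          = σ (n - 1) ≫ eqToHom (congrArg B.X (by omega : n - 1 + 1 = n)) := by
        rw [dif_pos (by omega : n = (n - 1) + 1)]
      have e2 : (if h : n + 1 = n + 1 then σ n ≫ eqToHom (congrArg B.X h.symm) else 0)
          = σ n := by
        rw [dif_pos rfl]
        simp
      rw [e1, e2]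
      have := hσgood n
      unfold GoodAt at this
      rw [this]
      simp }⟩

end BBH2

section Resolution
variable [HasColimits 𝒢]

/-- iterated kernels of the canonical maps from coproducts of `G` -/
noncomputable def RK (G X : 𝒢) : ℕ → 𝒢 := fun m =>
  Nat.rec X (fun _ K => kernel (Sigma.desc (fun h : G ⟶ K => h))) m

noncomputable def RP (G X : 𝒢) (m : ℕ) : 𝒢 := ∐ (fun _ : (G ⟶ RK G X m) => G)

noncomputable def Rπ (G X : 𝒢) (m : ℕ) : RP G X m ⟶ RK G X m :=
  Sigma.desc (fun h : G ⟶ RK G X m => h)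

lemma RK_succ (G X : 𝒢) (m : ℕ) : RK G X (m + 1) = kernel (Rπ G X m) := rfl

lemma Rπ_epi {G : 𝒢} (hG : IsSeparator G) (X : 𝒢) (m : ℕ) : Epi (Rπ G X m) :=
  (isSeparator_iff_epi G).mp hG (RK G X m)

/-- the objects of the resolution complex -/
noncomputable def ROb (G X A₀ A : 𝒢) : ℤ → 𝒢
  | .ofNat 0 => A
  | .ofNat 1 => A₀
  | .ofNat (m + 2) => RP G X m
  | .negSucc _ => 0

/-- the differentials of the resolution complex -/
noncomputable def RD (G : 𝒢) {X A₀ A : 𝒢} (i : X ⟶ A₀) (p : A₀ ⟶ A) :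
    ∀ n : ℤ, ROb G X A₀ A (n + 1) ⟶ ROb G X A₀ A n
  | .ofNat 0 => p
  | .ofNat 1 => Rπ G X 0 ≫ i
  | .ofNat (m + 2) => Rπ G X (m + 1) ≫ kernel.ι (Rπ G X m)
  | .negSucc 0 => 0
  | .negSucc (_ + 1) => 0

lemma Rsq (G : 𝒢) {X A₀ A : 𝒢} (i : X ⟶ A₀) (p : A₀ ⟶ A) (w : i ≫ p = 0) :
    ∀ n : ℤ, RD G i p (n + 1) ≫ RD G i p n = 0 := by
  rintro ((_ | _ | m) | (_ | m))
  · show (Rπ G X 0 ≫ i) ≫ p = 0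
    exact (Category.assoc _ _ _).trans ((congrArg (fun x => Rπ G X 0 ≫ x) w).trans comp_zero)
  · show (Rπ G X 1 ≫ kernel.ι (Rπ G X 0)) ≫ (Rπ G X 0 ≫ i) = 0
    exact (Category.assoc _ _ _).trans ((congrArg (fun x => Rπ G X (1) ≫ x) ((kernel.condition_assoc (Rπ G X (0)) (i)).trans zero_comp)).trans comp_zero)
  · show (Rπ G X (m + 2) ≫ kernel.ι (Rπ G X (m + 1))) ≫
        (Rπ G X (m + 1) ≫ kernel.ι (Rπ G X m)) = 0
    exact (Category.assoc _ _ _).trans ((congrArg (fun x => Rπ G X (m + 2) ≫ x) ((kernel.condition_assoc (Rπ G X (m + 1)) (kernel.ι (Rπ G X m))).trans zero_comp)).trans comp_zero)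
  · show RD G i p (Int.negSucc 0 + 1) ≫ 0 = 0
    rw [comp_zero]
  · show RD G i p (Int.negSucc (m + 1) + 1) ≫ 0 = 0
    rw [comp_zero]

/-- the resolution complex -/
noncomputable def RC (G : 𝒢) {X A₀ A : 𝒢} (i : X ⟶ A₀) (p : A₀ ⟶ A) (w : i ≫ p = 0) :
    ChainComplex 𝒢 ℤ :=
  ChainComplex.of (ROb G X A₀ A) (RD G i p) (Rsq G i p w)

end Resolution

section MemLemmas
variable {𝒜 ℬ : Set 𝒢}

lemma memA_of_iso (hpair : IsCotorsionPair 𝒜 ℬ) {X Y : 𝒢} (e : X ≅ Y) (hX : X ∈ 𝒜) :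
    Y ∈ 𝒜 :=
  (hpair.mem_left Y).mpr fun B hB => ((hpair.mem_left X).mp hX B hB).of_iso_left e

lemma zero_memA (hpair : IsCotorsionPair 𝒜 ℬ) {Z : 𝒢} (hZ : IsZero Z) : Z ∈ 𝒜 :=
  (hpair.mem_left Z).mpr fun _ _ => ext1_of_isZero_left hZ

lemma sigma_memA [HasColimits 𝒢] (hpair : IsCotorsionPair 𝒜 ℬ) {G : 𝒢} (hG : G ∈ 𝒜)
    (I : Type v) : (∐ fun _ : I => G) ∈ 𝒜 :=
  (hpair.mem_left _).mpr fun B hB =>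
    ext1_sigma _ B fun _ => (hpair.mem_left G).mp hG B hB

end MemLemmas

section RCfacts
variable [HasColimits 𝒢] {𝒜 ℬ : Set 𝒢}

lemma exact_congr {X₁ X₂ X₃ : 𝒢} {f f' : X₁ ⟶ X₂} {g g' : X₂ ⟶ X₃} (hf : f = f')
    (hg : g = g') (w : f ≫ g = 0) (w' : f' ≫ g' = 0) :
    (ShortComplex.mk f g w).Exact ↔ (ShortComplex.mk f' g' w').Exact := by
  subst hf; subst hg; rfl

variable (hpair : IsCotorsionPair 𝒜 ℬ) {G X A₀ A : 𝒢} (i : X ⟶ A₀) (p : A₀ ⟶ A)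

lemma RC_memA (hpair : IsCotorsionPair 𝒜 ℬ) (hGA : G ∈ 𝒜) (hA₀ : A₀ ∈ 𝒜) (hA : A ∈ 𝒜) :
    ∀ n : ℤ, ROb G X A₀ A n ∈ 𝒜 := by
  rintro ((_ | _ | m) | m)
  · exact hA
  · exact hA₀
  · exact sigma_memA hpair hGA _
  · exact zero_memA hpair (isZero_zero 𝒢)

lemma RC_exact (hGsep : IsSeparator G) (w : i ≫ p = 0) (hi : Mono i) (hp : Epi p)
    (hex : (ShortComplex.mk i p w).Exact) : IsExactComplex (RC G i p w) := by
  have hepi : ∀ m, Epi (Rπ G X m) := Rπ_epi hGsep X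
  show ∀ n, (RC G i p w).ExactAt n
  rintro ((_ | _ | m) | m)
  · -- exact at A (degree 0) : epi p
    show (RC G i p w).ExactAt 0
    rw [(RC G i p w).exactAt_iff' 1 0 (-1) (by rw [down_prev]; norm_num) (by rw [down_next]; norm_num)]
    have h1 : (RC G i p w).d 1 0 = p := by exact ChainComplex.of_d (ROb G X A₀ A) (RD G i p) 0
    have h2' : (RC G i p w).d 0 (-1) = 0 := by exact ChainComplex.of_d (ROb G X A₀ A) (RD G i p) (-1)
    exact (ShortComplex.exact_iff_epi _ (by exact h2')).mpr (by rw [show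
      (HomologicalComplex.sc' (RC G i p w) 1 0 (-1)).f = (RC G i p w).d 1 0 from rfl, h1]; exact hp)
  · -- exact at A₀ (degree 1)
    show (RC G i p w).ExactAt 1
    rw [(RC G i p w).exactAt_iff' 2 1 0 (by rw [down_prev]; norm_num) (by rw [down_next]; norm_num)]
    have h1 : (RC G i p w).d 2 1 = Rπ G X 0 ≫ i := by exact ChainComplex.of_d (ROb G X A₀ A) (RD G i p) 1
    have h2 : (RC G i p w).d 1 0 = p := by exact ChainComplex.of_d (ROb G X A₀ A) (RD G i p) 0
    have := hepi 0
    exact (exact_congr h1 h2 ((RC G i p w).d_comp_d _ _ _)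
      ((Category.assoc _ _ _).trans ((congrArg (fun x => Rπ G X 0 ≫ x) w).trans comp_zero))).mpr
      (@exact_epi_comp_ker 𝒢 _ _ _ _ _ _ (Rπ G X 0) i p _ hi w hex _)
  · -- exact at RP m (degree m+2)
    show (RC G i p w).ExactAt ((m : ℤ) + 2)
    rw [(RC G i p w).exactAt_iff' ((m : ℤ) + 3) ((m : ℤ) + 2) ((m : ℤ) + 1)
      (by rw [down_prev]; omega) (by rw [down_next]; omega)]
    have h1 : (RC G i p w).d ((m : ℤ) + 3) ((m : ℤ) + 2) =
        Rπ G X (m + 1) ≫ kernel.ι (Rπ G X m) := by exact ChainComplex.of_d (ROb G X A₀ A) (RD G i p) ((m : ℤ) + 2)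
    have := hepi m
    have := hepi (m + 1)
    have hker : ∀ (Z' : 𝒢) (μ : RK G X m ⟶ Z') (_ : Mono μ)
        (w2 : (Rπ G X (m + 1) ≫ kernel.ι (Rπ G X m)) ≫ (Rπ G X m ≫ μ) = 0),
        (ShortComplex.mk (Rπ G X (m + 1) ≫ kernel.ι (Rπ G X m)) (Rπ G X m ≫ μ) w2).Exact := by
      intro Z' μ hμ w2
      have hbase : (ShortComplex.mk (kernel.ι (Rπ G X m)) (Rπ G X m)
          (kernel.condition _)).Exact :=
        ShortComplex.exact_of_f_is_kernel _ (kernelIsKernel (Rπ G X m))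
      have hkc : (ShortComplex.mk (kernel.ι (Rπ G X m)) (Rπ G X m ≫ μ)
          (by rw [← Category.assoc, kernel.condition, zero_comp])).Exact :=
        exact_ker_comp_mono _ _ μ _ hbase _
      exact @exact_epi_comp_ker 𝒢 _ _ _ _ _ _ (Rπ G X (m + 1)) (kernel.ι (Rπ G X m)) (Rπ G X m ≫ μ) _ equalizer.ι_mono _ hkc _
    match m with
    | 0 =>
      have h2 : (RC G i p w).d ((0 : ℕ) + (2 : ℤ)) ((0 : ℕ) + (1 : ℤ)) = Rπ G X 0 ≫ i :=
        ChainComplex.of_d (ROb G X A₀ A) (RD G i p) ((0 : ℕ) + (1 : ℤ))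
      exact (exact_congr h1 h2 ((RC G i p w).d_comp_d _ _ _) (by
        exact (Category.assoc _ _ _).trans ((congrArg (fun x => Rπ G X (0 + 1) ≫ x) ((kernel.condition_assoc (Rπ G X (0)) (i)).trans zero_comp)).trans comp_zero))).mpr (hker A₀ i hi _)
    | Nat.succ m' =>
      have h2 : (RC G i p w).d ((Nat.succ m' : ℕ) + (2 : ℤ)) ((Nat.succ m' : ℕ) + (1 : ℤ)) =
          Rπ G X (m' + 1) ≫ kernel.ι (Rπ G X m') :=
        ChainComplex.of_d (ROb G X A₀ A) (RD G i p) ((Nat.succ m' : ℕ) + (1 : ℤ))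
      exact (exact_congr h1 h2 ((RC G i p w).d_comp_d _ _ _) (by
        exact (Category.assoc _ _ _).trans ((congrArg (fun x => Rπ G X (m'.succ + 1) ≫ x) ((kernel.condition_assoc (Rπ G X (m' + 1)) (kernel.ι (Rπ G X m'))).trans zero_comp)).trans comp_zero))).mpr (hker _ (kernel.ι (Rπ G X m')) equalizer.ι_mono _)
  · -- negative degrees : middle object is zero
    rw [HomologicalComplex.exactAt_iff]
    exact ShortComplex.exact_of_isZero_X₂ _ (isZero_zero 𝒢)

end RCfacts

section Part1
variable [HasColimits 𝒢] {𝒜 ℬ : Set 𝒢}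

theorem part1 (hpair : IsCotorsionPair 𝒜 ℬ) {G : 𝒢} (hGsep : IsSeparator G) (hGA : G ∈ 𝒜)
    (hcompatA : ∀ X : ChainComplex 𝒢 ℤ, (DgA 𝒜 ℬ X ∧ IsExactComplex X) ↔ ATilde 𝒜 X) :
    ∀ ⦃X A₀ A : 𝒢⦄ (i : X ⟶ A₀) (p : A₀ ⟶ A) (w : i ≫ p = 0),
      Mono i → Epi p → (ShortComplex.mk i p w).Exact → A₀ ∈ 𝒜 → A ∈ 𝒜 → X ∈ 𝒜 := by
  intro X A₀ A i p w hi hp hex hA₀ hA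
  have hz : ∀ n : ℤ, n < 0 → IsZero ((RC G i p w).X n) := by
    intro n hn
    obtain ⟨m, rfl⟩ : ∃ m : ℕ, n = Int.negSucc m :=
      ⟨(-n - 1).toNat, by rw [Int.negSucc_eq]; omega⟩
    exact isZero_zero 𝒢
  have hmem : ∀ n : ℤ, (RC G i p w).X n ∈ 𝒜 := fun n => RC_memA hpair hGA hA₀ hA n
  have hexC : IsExactComplex (RC G i p w) := RC_exact i p hGsep w hi hp hex
  have hAT : ATilde 𝒜 (RC G i p w) :=
    (hcompatA _).mp ⟨⟨hmem, fun B hB f => bb_homotopy hpair hz hmem hB f⟩, hexC⟩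
  have hc : (RC G i p w).cycles 1 ∈ 𝒜 := hAT.2 1
  -- identify cycles 1 with X
  have hd10 : (RC G i p w).d 1 0 = p := by
    exact ChainComplex.of_d (ROb G X A₀ A) (RD G i p) 0
  have hnext : (ComplexShape.down ℤ).next 1 = 0 := by rw [down_next]; norm_num
  have hiw : (i ≫ (RC G i p w).d 1 0 = 0) := by rw [hd10]; exact w
  have hicd : (RC G i p w).iCycles 1 ≫ p = 0 := by
    have := (RC G i p w).iCycles_d 1 0
    rw [hd10] at this
    exact this
  refine memA_of_iso hpair (X := (RC G i p w).cycles 1) ?_ hc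
  refine ⟨hex.lift ((RC G i p w).iCycles 1) hicd, (RC G i p w).liftCycles i 0 hnext hiw, ?_, ?_⟩
  · rw [← cancel_mono ((RC G i p w).iCycles 1)]
    refine ((Category.assoc _ _ _).trans ((congrArg (fun x => hex.lift ((RC G i p w).iCycles 1) hicd ≫ x) ((RC G i p w).liftCycles_i _ _ _ _)).trans ?_)).trans (Category.id_comp _).symm
    exact hex.lift_f _ _
  · rw [← cancel_mono i]
    rw [Category.assoc]
    have h1 : hex.lift ((RC G i p w).iCycles 1) hicd ≫ i = (RC G i p w).iCycles 1 :=
      hex.lift_f _ _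
    rw [h1]; exact ((RC G i p w).liftCycles_i _ _ _ _).trans (Category.id_comp _).symm

end Part1

section Part2
variable [HasColimits 𝒢] {𝒜 ℬ : Set 𝒢}

theorem part2 (hpair : IsCotorsionPair 𝒜 ℬ) {G : 𝒢} (hGsep : IsSeparator G) (hGA : G ∈ 𝒜)
    (hcompatA : ∀ X : ChainComplex 𝒢 ℤ, (DgA 𝒜 ℬ X ∧ IsExactComplex X) ↔ ATilde 𝒜 X) :
    ∀ ⦃B₀ B₁ Y : 𝒢⦄ (j : B₀ ⟶ B₁) (q : B₁ ⟶ Y) (w : j ≫ q = 0),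
      Mono j → Epi q → (ShortComplex.mk j q w).Exact → B₀ ∈ ℬ → B₁ ∈ ℬ → Y ∈ ℬ := by
  intro B₀ B₁ Y j q w hj hq hexq hB₀ hB₁
  rw [hpair.mem_right]
  intro A hA T k r wkr hk hr hexkr
  haveI := hk
  haveI := hr
  haveI := hj
  haveI := hq
  -- canonical epi from a coproduct of copies of G onto T
  let τ : (∐ fun _ : (G ⟶ T) => G) ⟶ T := Sigma.desc (fun h => h)
  haveI hτ : Epi τ := (isSeparator_iff_epi G).mp hGsep T
  let ρ : (∐ fun _ : (G ⟶ T) => G) ⟶ A := τ ≫ r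
  haveI hρ : Epi ρ := epi_comp τ r
  have hwι : kernel.ι ρ ≫ ρ = 0 := kernel.condition ρ
  have hexι : (ShortComplex.mk (kernel.ι ρ) ρ hwι).Exact :=
    ShortComplex.exact_of_f_is_kernel _ (kernelIsKernel ρ)
  have hP : (∐ fun _ : (G ⟶ T) => G) ∈ 𝒜 := sigma_memA hpair hGA _
  -- the kernel is in 𝒜 by part 1
  have hZ : kernel ρ ∈ 𝒜 :=
    part1 hpair hGsep hGA hcompatA (kernel.ι ρ) ρ hwι inferInstance hρ hexι hP hA
  -- the restriction of τ to the kernel factors through Y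
  have hδw : (kernel.ι ρ ≫ τ) ≫ r = 0 := by
    rw [Category.assoc]
    exact hwι
  let δ : kernel ρ ⟶ Y := hexkr.lift (kernel.ι ρ ≫ τ) hδw
  have hδ : δ ≫ k = kernel.ι ρ ≫ τ := hexkr.lift_f _ _
  -- lift δ through q using Ext¹(Z, B₀) = 0
  obtain ⟨δ', hδ'⟩ := lift_of_ext1 j q w hj hq hexq ((hpair.mem_left _).mp hZ B₀ hB₀) δ
  -- extend δ' along the kernel inclusion using Ext¹(A, B₁) = 0
  obtain ⟨ε, hε⟩ := extend_of_ext1 (kernel.ι ρ) ρ hwι inferInstance hρ hexι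
    ((hpair.mem_left A).mp hA B₁ hB₁) δ'
  -- correct τ and descend along the cokernel
  have hκ : kernel.ι ρ ≫ (τ - ε ≫ q ≫ k) = 0 := by
    rw [Preadditive.comp_sub, ← Category.assoc, ← Category.assoc, hε, ← hδ, hδ']
    exact sub_self _
  refine ⟨hexι.desc (τ - ε ≫ q ≫ k) hκ, ?_⟩
  have hdesc : ρ ≫ hexι.desc (τ - ε ≫ q ≫ k) hκ = τ - ε ≫ q ≫ k := hexι.g_desc _ _
  rw [← cancel_epi ρ, ← Category.assoc, hdesc, Preadditive.sub_comp, Category.assoc,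
    Category.assoc, wkr, comp_zero, comp_zero, sub_zero, Category.comp_id]

end Part2

/-- Let `(𝒜, ℬ)` be a small cotorsion pair in a Grothendieck category
with a generator `G ∈ 𝒜`.  If the induced cotorsion pairs `(dg-𝒜, ℬ̃)` and `(𝒜̃, dg-ℬ)`
on `Ch(𝒢)` are compatible, i.e. `dg-𝒜 ∩ ℰ = 𝒜̃` and `dg-ℬ ∩ ℰ = ℬ̃`, then `𝒜` is closed
under kernels of epimorphisms between objects of `𝒜` and `ℬ` is closed under cokernels
of monomorphisms between objects of `ℬ`. -/
theorem stmt19 [HasColimits 𝒢] [AB5 𝒢] (𝒜 ℬ : Set 𝒢)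
    (hpair : IsCotorsionPair 𝒜 ℬ) (I : SmallCotorsionData 𝒜 ℬ)
    (hcompatA : ∀ X : ChainComplex 𝒢 ℤ, (DgA 𝒜 ℬ X ∧ IsExactComplex X) ↔ ATilde 𝒜 X)
    (hcompatB : ∀ Y : ChainComplex 𝒢 ℤ, (DgB 𝒜 ℬ Y ∧ IsExactComplex Y) ↔ BTilde ℬ Y) :
    (∀ ⦃X A₀ A : 𝒢⦄ (i : X ⟶ A₀) (p : A₀ ⟶ A) (w : i ≫ p = 0),
        Mono i → Epi p → (ShortComplex.mk i p w).Exact → A₀ ∈ 𝒜 → A ∈ 𝒜 → X ∈ 𝒜) ∧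
      (∀ ⦃B₀ B₁ Y : 𝒢⦄ (j : B₀ ⟶ B₁) (q : B₁ ⟶ Y) (w : j ≫ q = 0),
        Mono j → Epi q → (ShortComplex.mk j q w).Exact → B₀ ∈ ℬ → B₁ ∈ ℬ → Y ∈ ℬ) := by
  exact ⟨part1 hpair I.cod_i₀_separator I.cod_i₀_mem hcompatA,
    part2 hpair I.cod_i₀_separator I.cod_i₀_mem hcompatA⟩
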